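/- arXiv:1610.05755 — 7 statements merged into one kernel-verified Lean document; each statement's English description precedes it below -/
import Mathlib

section
/- Let n be a vector of label counts with n_{j*} ≥ n_j for all j. If M adds independent Laplace(1/γ) noise to each coordinate and outputs the argmax, then Pr[M(d) ≠ j*] ≤ Σ_{j ≠ j*} (2 + γ(n_{j*} − n_j)) / (4 exp(γ(n_{j*} − n_j))). -/
open MeasureTheory ProbabilityTheory Real Finset

section NoisyMaxAux

open Set Filter

lemma int_exp_neg_Ioi {c : ℝ} (hc : 0 < c) (a : ℝ) :
    ∫ x in Ioi a, exp (-(c * x)) = exp (-(c * a)) / c := by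
  have h : ∀ x ∈ Ici a, HasDerivAt (fun y => -exp (-(c * y)) / c) (exp (-(c * x))) x := by
    intro x _
    have : HasDerivAt (fun y => -(c * y)) (-c) x := by
      simpa [Pi.neg_def] using ((hasDerivAt_id x).const_mul c).neg
    have := (this.exp).fun_neg.div_const c
    refine this.congr_deriv ?_
    field_simp [hc.ne']
  have htend : Tendsto (fun y => -exp (-(c * y)) / c) atTop (nhds 0) := by
    have h1 : Tendsto (fun y : ℝ => -(c * y)) atTop atBot := by
      have := (tendsto_const_mul_atTop_of_pos hc).mpr (tendsto_id (α := ℝ) (x := atTop))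
      exact tendsto_neg_atBot_iff.mpr this
    have := (tendsto_exp_atBot.comp h1).neg.div_const c
    simpa using this
  have hint : IntegrableOn (fun x : ℝ => exp (-(c * x))) (Ioi a) := by
    simpa [neg_mul] using exp_neg_integrableOn_Ioi a hc
  rw [integral_Ioi_of_hasDerivAt_of_tendsto' h hint htend]
  ring

lemma int_exp_Iic {c : ℝ} (hc : 0 < c) (a : ℝ) :
    ∫ x in Iic a, exp (c * x) = exp (c * a) / c := by
  have h := int_exp_neg_Ioi hc (-a)
  rw [← integral_comp_neg_Iic] at h
  simpa using h

lemma ii_exp_mul (c y a : ℝ) : IntervalIntegrable (fun x => exp (c * x)) volume y a :=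
  (continuous_exp.comp (continuous_const.mul continuous_id)).intervalIntegrable y a

open intervalIntegral in
lemma intervalInt_exp_mul {c : ℝ} (hc : c ≠ 0) (y a : ℝ) :
    ∫ x in y..a, exp (c * x) = (exp (c * a) - exp (c * y)) / c := by
  have h := intervalIntegral.integral_comp_mul_left (fun u => exp u) (c := c) (a := y) (b := a) hc
  rw [h, integral_exp, smul_eq_mul, div_eq_inv_mul]

lemma intOn_exp_Iic {c : ℝ} (hc : 0 < c) (a : ℝ) :
    IntegrableOn (fun x : ℝ => exp (c * x)) (Iic a) := by
  refine integrableOn_Iic_of_intervalIntegral_norm_bounded (exp (c * a) / c) a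
    (fun y => (ii_exp_mul c y a).1) tendsto_id
    (Filter.eventually_of_mem (Iic_mem_atBot a) fun y _ => ?_)
  simp_rw [norm_of_nonneg (exp_pos _).le, intervalInt_exp_mul hc.ne']
  rw [div_le_div_iff_of_pos_right hc]
  simp [(exp_pos _).le]

noncomputable def lapf (γ x : ℝ) : ℝ := γ/2 * exp (-γ * |x|)
noncomputable def lapT (γ s : ℝ) : ℝ := if 0 ≤ s then exp (-(γ*s))/2 else 1 - exp (γ*s)/2

lemma lapf_cont (γ : ℝ) : Continuous (lapf γ) :=
  continuous_const.mul (continuous_exp.comp (continuous_const.mul continuous_abs))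

lemma lapf_nonneg {γ : ℝ} (hγ : 0 < γ) (x : ℝ) : 0 ≤ lapf γ x :=
  mul_nonneg (by positivity) (exp_pos _).le

lemma lapf_intOn_Iic {γ : ℝ} (hγ : 0 < γ) (a : ℝ) (ha : a ≤ 0) :
    IntegrableOn (lapf γ) (Iic a) := by
  have h : IntegrableOn (fun x : ℝ => γ/2 * exp (γ * x)) (Iic a) :=
    (intOn_exp_Iic hγ a).const_mul (γ/2)
  refine h.congr_fun (fun x hx => ?_) measurableSet_Iic
  simp only [lapf, abs_of_nonpos (le_trans hx ha), mul_neg, neg_mul, neg_neg]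

lemma lapf_intOn_Ioi {γ : ℝ} (hγ : 0 < γ) (a : ℝ) (ha : 0 ≤ a) :
    IntegrableOn (lapf γ) (Ioi a) := by
  have h : IntegrableOn (fun x : ℝ => γ/2 * exp (-γ * x)) (Ioi a) :=
    (exp_neg_integrableOn_Ioi a hγ).const_mul (γ/2)
  refine h.congr_fun (fun x hx => ?_) measurableSet_Ioi
  simp only [lapf, abs_of_nonneg (le_trans ha (le_of_lt hx))]

lemma lapf_int {γ : ℝ} (hγ : 0 < γ) : Integrable (lapf γ) := by
  rw [← integrableOn_univ, ← Set.Iic_union_Ioi (a := (0:ℝ))]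
  exact (lapf_intOn_Iic hγ 0 le_rfl).union (lapf_intOn_Ioi hγ 0 le_rfl)

lemma lapT_pos_eq {γ : ℝ} (hγ : 0 < γ) {s : ℝ} (hs : 0 ≤ s) :
    ∫ y in Ici s, lapf γ y = exp (-(γ * s))/2 := by
  rw [integral_Ici_eq_integral_Ioi]
  rw [setIntegral_congr_fun measurableSet_Ioi
    (g := fun x => γ/2 * exp (-(γ * x)))
    (fun x hx => by simp [lapf, abs_of_nonneg (le_trans hs (le_of_lt hx)), neg_mul])]
  rw [integral_const_mul, int_exp_neg_Ioi hγ s]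
  field_simp

lemma lapT_eq {γ : ℝ} (hγ : 0 < γ) (s : ℝ) :
    ∫ y in Ici s, lapf γ y = lapT γ s := by
  unfold lapT
  split_ifs with hs
  · exact lapT_pos_eq hγ hs
  · push_neg at hs
    have hdisj : Disjoint (Ico s 0) (Ici (0:ℝ)) :=
      Set.disjoint_left.mpr fun x hx h2 => absurd h2 (not_le.mpr hx.2)
    rw [← Set.Ico_union_Ici_eq_Ici hs.le,
      setIntegral_union hdisj measurableSet_Ici
        ((lapf_int hγ).integrableOn) ((lapf_int hγ).integrableOn),
      lapT_pos_eq hγ le_rfl]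
    have h1 : ∫ y in Ico s 0, lapf γ y = (1 - exp (γ * s))/2 := by
      rw [setIntegral_congr_fun measurableSet_Ico
        (g := fun x => γ/2 * exp (γ * x))
        (fun x hx => by simp only [lapf, abs_of_nonpos (le_of_lt hx.2), mul_neg, neg_mul, neg_neg])]
      rw [integral_Ico_eq_integral_Ioo, ← integral_Ioc_eq_integral_Ioo,
        ← intervalIntegral.integral_of_le hs.le, intervalIntegral.integral_const_mul,
        intervalInt_exp_mul hγ.ne' s 0]
      simp only [mul_zero, exp_zero]; field_simp
    rw [h1]
    simp only [mul_zero, neg_zero, exp_zero]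
    ring

lemma lapT_meas (γ : ℝ) : Measurable (lapT γ) := by
  unfold lapT
  refine Measurable.ite measurableSet_Ici ?_ ?_ <;> fun_prop

lemma lapT_nonneg {γ : ℝ} (hγ : 0 < γ) (s : ℝ) : 0 ≤ lapT γ s := by
  unfold lapT; split_ifs with h
  · positivity
  · push_neg at h
    have : exp (γ * s) < 1 := by
      rw [exp_lt_one_iff]; exact mul_neg_of_pos_of_neg hγ h
    linarith

lemma lapT_le_one {γ : ℝ} (hγ : 0 < γ) (s : ℝ) : lapT γ s ≤ 1 := by
  unfold lapT; split_ifs with h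
  · have : exp (-(γ * s)) ≤ 1 := by
      rw [exp_le_one_iff]; simp; positivity
    linarith
  · have := (exp_pos (γ * s)); linarith

lemma lap_key_int {γ Δ : ℝ} (hγ : 0 < γ) (hΔ : 0 ≤ Δ) :
    ∫ x, lapf γ x * lapT γ (x + Δ) = (2 + γ*Δ) / (4 * exp (γ*Δ)) := by
  set g : ℝ → ℝ := fun x => lapf γ x * lapT γ (x + Δ) with hg
  have hgm : AEStronglyMeasurable g volume :=
    ((lapf_cont γ).aestronglyMeasurable.mul
      ((lapT_meas γ).comp (measurable_id.add_const Δ)).aestronglyMeasurable)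
  have hgint : Integrable g := by
    refine (lapf_int hγ).mono hgm (Filter.Eventually.of_forall fun x => ?_)
    rw [norm_of_nonneg (mul_nonneg (lapf_nonneg hγ x) (lapT_nonneg hγ _)),
      norm_of_nonneg (lapf_nonneg hγ x)]
    nth_rewrite 2 [← mul_one (lapf γ x)]
    exact mul_le_mul_of_nonneg_left (lapT_le_one hγ _) (lapf_nonneg hγ x)
  -- split ℝ = Iic 0 ∪ Ioi 0
  have hsplit : ∫ x, g x = (∫ x in Iic (0:ℝ), g x) + ∫ x in Ioi (0:ℝ), g x := by
    rw [← integral_add_compl measurableSet_Iic hgint, compl_Iic]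
  -- region 3
  have hR3 : ∫ x in Ioi (0:ℝ), g x = exp (-(γ*Δ)) / 8 := by
    rw [setIntegral_congr_fun measurableSet_Ioi
      (g := fun x => γ * exp (-(γ*Δ)) / 4 * exp (-((2*γ) * x)))
      (fun x hx => by
        have hx0 : (0:ℝ) ≤ x := le_of_lt hx
        have hxd : (0:ℝ) ≤ x + Δ := by linarith
        simp only [hg, lapf, lapT, if_pos hxd, abs_of_nonneg hx0]
        have h1 : exp (-γ * x) * exp (-(γ * (x + Δ)))
            = exp (-(γ * Δ)) * exp (-(2 * γ * x)) := by
          rw [← exp_add, ← exp_add]; ring_nf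
        linear_combination (γ/4) * h1)]
    rw [integral_const_mul, int_exp_neg_Ioi (by linarith : (0:ℝ) < 2*γ) 0]
    rw [mul_zero, neg_zero, exp_zero]
    field_simp; ring
  -- split Iic 0
  have hdisj : Disjoint (Iic (-Δ)) (Ioc (-Δ) (0:ℝ)) :=
    Set.disjoint_left.mpr fun x hx h2 => absurd h2.1 (not_lt.mpr hx)
  have hsplit2 : ∫ x in Iic (0:ℝ), g x
      = (∫ x in Iic (-Δ), g x) + ∫ x in Ioc (-Δ) (0:ℝ), g x := by
    rw [← setIntegral_union hdisj measurableSet_Ioc hgint.integrableOn hgint.integrableOn,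
      Set.Iic_union_Ioc_eq_Iic (by linarith : -Δ ≤ (0:ℝ))]
  -- region 2
  have hR2 : ∫ x in Ioc (-Δ) (0:ℝ), g x = γ * Δ * exp (-(γ*Δ)) / 4 := by
    rw [setIntegral_congr_fun measurableSet_Ioc
      (g := fun _ => γ * exp (-(γ*Δ)) / 4)
      (fun x hx => by
        have hxd : (0:ℝ) ≤ x + Δ := by have := hx.1; linarith
        have hx0 : x ≤ 0 := hx.2
        simp only [hg, lapf, lapT, if_pos hxd, abs_of_nonpos hx0]
        have h1 : exp (-γ * -x) * exp (-(γ * (x + Δ))) = exp (-(γ * Δ)) := by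
          rw [← exp_add]; ring_nf
        linear_combination (γ/4) * h1)]
    rw [setIntegral_const, measureReal_def, Real.volume_Ioc, smul_eq_mul]
    rw [ENNReal.toReal_ofReal (by linarith)]
    ring
  -- region 1
  have hR1 : ∫ x in Iic (-Δ), g x = exp (-(γ*Δ))/2 - exp (-(γ*Δ))/8 := by
    have e1 : IntegrableOn (fun x : ℝ => γ/2 * exp (γ * x)) (Iic (-Δ)) :=
      (intOn_exp_Iic hγ _).const_mul _
    have e2 : IntegrableOn (fun x : ℝ => γ/4 * exp (γ*Δ) * exp ((2*γ) * x)) (Iic (-Δ)) :=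
      (intOn_exp_Iic (by linarith : (0:ℝ) < 2*γ) _).const_mul _
    rw [setIntegral_congr_fun measurableSet_Iic
      (g := fun x => γ/2 * exp (γ * x) - γ/4 * exp (γ*Δ) * exp ((2*γ) * x))
      (fun x hx => by
        have hxd : x + Δ ≤ 0 := by have : x ≤ -Δ := hx; linarith
        have hx0 : x ≤ 0 := by linarith
        have hT : lapT γ (x + Δ) = 1 - exp (γ * (x+Δ))/2 := by
          unfold lapT; split_ifs with h
          · have h0 : x + Δ = 0 := le_antisymm hxd h
            rw [h0]; norm_num
          · rfl
        simp only [hg, lapf, hT, abs_of_nonpos hx0]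
        have h1 : exp (-γ * -x) = exp (γ * x) := by ring_nf
        have h2 : exp (γ * x) * exp (γ * (x + Δ)) = exp (γ*Δ) * exp (2 * γ * x) := by
          rw [← exp_add, ← exp_add]; ring_nf
        have h2' : (2*γ) * x = 2 * γ * x := by ring
        rw [h2', h1]
        linear_combination (-γ/4) * h2)]
    rw [integral_sub e1 e2, integral_const_mul, integral_const_mul, int_exp_Iic hγ,
      int_exp_Iic (by linarith : (0:ℝ) < 2*γ)]
    have h3 : exp (γ * -Δ) = exp (-(γ*Δ)) := by ring_nf
    have h4 : exp (γ*Δ) * exp (-(2*γ*Δ)) = exp (-(γ*Δ)) := by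
      rw [← exp_add]; ring_nf
    have h5 : exp ((2*γ) * -Δ) = exp (-(2*γ*Δ)) := by ring_nf
    rw [h3, h5]
    field_simp
    have h6 : exp (-(γ*2*Δ)) = exp (-(2*γ*Δ)) := by ring_nf
    rw [h6]; linear_combination (-8) * h4
  rw [hsplit, hsplit2, hR1, hR2, hR3]
  have hE : exp (-(γ*Δ)) = (exp (γ*Δ))⁻¹ := exp_neg _
  rw [hE]
  have := exp_ne_zero (γ*Δ)
  field_simp
  ring

open ProbabilityTheory in
lemma lap_prob_eq {Ω : Type*} [MeasureSpace Ω] [IsProbabilityMeasure (ℙ : Measure Ω)]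
    {γ Δ : ℝ} (hγ : 0 < γ) (hΔ : 0 ≤ Δ) {X Y : Ω → ℝ} (hX : Measurable X) (hY : Measurable Y)
    (hXY : IndepFun X Y ℙ)
    (hXd : Measure.map X ℙ = volume.withDensity (fun x => ENNReal.ofReal (lapf γ x)))
    (hYd : Measure.map Y ℙ = volume.withDensity (fun x => ENNReal.ofReal (lapf γ x))) :
    ℙ {ω | X ω + Δ ≤ Y ω} = ENNReal.ofReal ((2 + γ*Δ) / (4 * exp (γ*Δ))) := by
  set μγ : Measure ℝ := volume.withDensity (fun x => ENNReal.ofReal (lapf γ x)) with hμγ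
  have hprob : IsProbabilityMeasure μγ := by
    rw [← hXd]; exact Measure.isProbabilityMeasure_map hX.aemeasurable
  have hdm : Measurable fun x => ENNReal.ofReal (lapf γ x) :=
    (lapf_cont γ).measurable.ennreal_ofReal
  have hIci : ∀ s : ℝ, μγ (Ici s) = ENNReal.ofReal (lapT γ s) := by
    intro s
    rw [hμγ, withDensity_apply _ measurableSet_Ici,
      ← ofReal_integral_eq_lintegral_ofReal ((lapf_int hγ).integrableOn)
        (Filter.Eventually.of_forall (lapf_nonneg hγ)), lapT_eq hγ]
  have hS : MeasurableSet {p : ℝ × ℝ | p.1 + Δ ≤ p.2} :=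
    measurableSet_le (measurable_fst.add_const Δ) measurable_snd
  have hmap : Measure.map (fun ω => (X ω, Y ω)) ℙ = μγ.prod μγ := by
    rw [(indepFun_iff_map_prod_eq_prod_map_map hX.aemeasurable hY.aemeasurable).mp hXY,
      hXd, hYd]
  have h1 : ℙ {ω | X ω + Δ ≤ Y ω}
      = Measure.map (fun ω => (X ω, Y ω)) ℙ {p : ℝ × ℝ | p.1 + Δ ≤ p.2} := by
    rw [Measure.map_apply (hX.prodMk hY) hS]; rfl
  rw [h1, hmap, Measure.prod_apply hS]
  have h2 : ∀ x : ℝ, μγ (Prod.mk x ⁻¹' {p : ℝ × ℝ | p.1 + Δ ≤ p.2})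
      = ENNReal.ofReal (lapT γ (x + Δ)) := by
    intro x
    have : Prod.mk x ⁻¹' {p : ℝ × ℝ | p.1 + Δ ≤ p.2} = Ici (x + Δ) := rfl
    rw [this, hIci]
  simp_rw [h2]
  have hTm : Measurable fun x : ℝ => ENNReal.ofReal (lapT γ (x + Δ)) :=
    ((lapT_meas γ).comp (measurable_id.add_const Δ)).ennreal_ofReal
  rw [hμγ, lintegral_withDensity_eq_lintegral_mul _ hdm hTm]
  have h3 : ∀ x : ℝ, ENNReal.ofReal (lapf γ x) * ENNReal.ofReal (lapT γ (x + Δ))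
      = ENNReal.ofReal (lapf γ x * lapT γ (x + Δ)) := fun x =>
    (ENNReal.ofReal_mul (lapf_nonneg hγ x)).symm
  simp_rw [Pi.mul_apply, h3]
  have hgint : Integrable (fun x => lapf γ x * lapT γ (x + Δ)) := by
    refine (lapf_int hγ).mono
      ((lapf_cont γ).aestronglyMeasurable.mul
        ((lapT_meas γ).comp (measurable_id.add_const Δ)).aestronglyMeasurable)
      (Filter.Eventually.of_forall fun x => ?_)
    rw [norm_of_nonneg (mul_nonneg (lapf_nonneg hγ x) (lapT_nonneg hγ _)),
      norm_of_nonneg (lapf_nonneg hγ x)]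
    nth_rewrite 2 [← mul_one (lapf γ x)]
    exact mul_le_mul_of_nonneg_left (lapT_le_one hγ _) (lapf_nonneg hγ x)
  rw [← ofReal_integral_eq_lintegral_ofReal hgint
    (Filter.Eventually.of_forall fun x => mul_nonneg (lapf_nonneg hγ x) (lapT_nonneg hγ _)),
    lap_key_int hγ hΔ]


end NoisyMaxAux

/-- Noisy-max mechanism: if `j*` has the largest count, the probability that some other
class beats `j*` after adding independent Laplace(1/γ) noise to each count is at most
`∑_{j ≠ j*} (2 + γ(n_{j*} - n_j)) / (4 exp(γ(n_{j*} - n_j)))`. -/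
theorem noisy_max_error_bound
    {Ω : Type*} [MeasureSpace Ω] [IsProbabilityMeasure (ℙ : Measure Ω)]
    {m : ℕ} (γ : ℝ) (hγ : 0 < γ) (n : Fin m → ℤ) (jstar : Fin m)
    (hmax : ∀ j, n j ≤ n jstar)
    (L : Fin m → Ω → ℝ) (hLmeas : ∀ j, Measurable (L j))
    (hindep : iIndepFun L ℙ)
    (hpdf : ∀ j, Measure.map (L j) ℙ =
      volume.withDensity (fun x => ENNReal.ofReal (γ / 2 * Real.exp (-γ * |x|)))) :
    ℙ {ω | ∃ j, j ≠ jstar ∧ (n jstar : ℝ) + L jstar ω ≤ (n j : ℝ) + L j ω} ≤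
      ENNReal.ofReal (∑ j ∈ Finset.univ.filter (· ≠ jstar),
        (2 + γ * ((n jstar : ℝ) - (n j : ℝ))) /
          (4 * Real.exp (γ * ((n jstar : ℝ) - (n j : ℝ))))) := by
  set S := Finset.univ.filter (· ≠ jstar) with hS
  have hset : {ω | ∃ j, j ≠ jstar ∧ (n jstar : ℝ) + L jstar ω ≤ (n j : ℝ) + L j ω}
      = ⋃ j ∈ S, {ω | L jstar ω + ((n jstar : ℝ) - (n j : ℝ)) ≤ L j ω} := by
    ext ω
    simp only [Set.mem_setOf_eq, Set.mem_iUnion, hS, Finset.mem_filter, Finset.mem_univ,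
      true_and, exists_prop]
    constructor
    · rintro ⟨j, hj, hle⟩; exact ⟨j, hj, by linarith⟩
    · rintro ⟨j, hj, hle⟩; exact ⟨j, hj, by linarith⟩
  rw [hset]
  refine le_trans (measure_biUnion_finset_le S _) ?_
  have hterm : ∀ j ∈ S, ℙ {ω | L jstar ω + ((n jstar : ℝ) - (n j : ℝ)) ≤ L j ω}
      = ENNReal.ofReal ((2 + γ * ((n jstar : ℝ) - (n j : ℝ))) /
          (4 * Real.exp (γ * ((n jstar : ℝ) - (n j : ℝ))))) := by
    intro j hj
    have hjne : j ≠ jstar := by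
      simpa [hS] using hj
    have hΔ : (0:ℝ) ≤ (n jstar : ℝ) - (n j : ℝ) := by
      have := hmax j
      simp only [sub_nonneg]
      exact_mod_cast this
    exact lap_prob_eq hγ hΔ (hLmeas jstar) (hLmeas j)
      (hindep.indepFun hjne.symm) (hpdf jstar) (hpdf j)
  apply le_of_eq
  calc ∑ j ∈ S, ℙ {ω | L jstar ω + ((n jstar : ℝ) - (n j : ℝ)) ≤ L j ω}
      = ∑ j ∈ S, ENNReal.ofReal ((2 + γ * ((n jstar : ℝ) - (n j : ℝ))) /
          (4 * Real.exp (γ * ((n jstar : ℝ) - (n j : ℝ))))) := Finset.sum_congr rfl hterm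
    _ = ENNReal.ofReal (∑ j ∈ S, (2 + γ * ((n jstar : ℝ) - (n j : ℝ))) /
          (4 * Real.exp (γ * ((n jstar : ℝ) - (n j : ℝ))))) := by
        rw [ENNReal.ofReal_sum_of_nonneg]
        intro j hj
        have hjne : j ≠ jstar := by simpa [hS] using hj
        have hΔ : (0:ℝ) ≤ (n jstar : ℝ) - (n j : ℝ) := by
          have := hmax j
          simp only [sub_nonneg]
          exact_mod_cast this
        have h2 : (0:ℝ) ≤ 2 + γ * ((n jstar : ℝ) - (n j : ℝ)) := by nlinarith
        positivity
end

section
/- For fixed γ > 0 and l ≥ 0, the function f(z) = (1−z)((1−z)/(1−e^{2γ}z))^l + z e^{2γl} is non-decreasing on the interval (0, (e^{2γ}−1)/(e^{4γ}−1)). -/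
open Real Set

/-- Key algebraic/analytic inequality: for `a ≥ 1`, `r > 0`, `l ≥ 0`,
`a^l ≥ r^l * (1 - l*(a*r-1))`. -/
lemma key_ineq (a r l : ℝ) (ha : 1 ≤ a) (hr : 0 < r) (hl : 0 ≤ l) :
    r ^ l * (1 - l * (a * r - 1)) ≤ a ^ l := by
  have ha0 : 0 < a := by linarith
  have hdiv : 0 < a / r := div_pos ha0 hr
  have h1 : Real.log (r / a) ≤ r / a - 1 := Real.log_le_sub_one_of_pos (div_pos hr ha0)
  have hra : r / a ≤ a * r := by
    rw [div_le_iff₀ ha0]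
    nlinarith [mul_nonneg (mul_nonneg hr.le (show (0:ℝ) ≤ a - 1 by linarith))
      (show (0:ℝ) ≤ a + 1 by linarith)]
  have hlog : 1 - a * r ≤ Real.log (a / r) := by
    have : Real.log (a / r) = - Real.log (r / a) := by
      rw [← Real.log_inv]
      congr 1
      field_simp
    linarith [this, h1, hra]
  have hexp : 1 + l * Real.log (a / r) ≤ (a / r) ^ l := by
    rw [Real.rpow_def_of_pos hdiv]
    have := Real.add_one_le_exp (Real.log (a / r) * l)
    linarith [this]
  have hmul : 1 - l * (a * r - 1) ≤ (a / r) ^ l := by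
    have : l * (1 - a * r) ≤ l * Real.log (a / r) := mul_le_mul_of_nonneg_left hlog hl
    nlinarith
  have hdivpow : (a / r) ^ l = a ^ l / r ^ l := Real.div_rpow (le_of_lt ha0) hr.le l
  have hrl : 0 < r ^ l := Real.rpow_pos_of_pos hr l
  rw [hdivpow] at hmul
  calc r ^ l * (1 - l * (a * r - 1)) ≤ r ^ l * (a ^ l / r ^ l) :=
        mul_le_mul_of_nonneg_left hmul (le_of_lt hrl)
    _ = a ^ l := by field_simp

/-- For fixed `γ > 0` and `l ≥ 0`, the function
`f(z) = (1-z)((1-z)/(1-e^{2γ}z))^l + z e^{2γl}` is non-decreasing on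
`(0, (e^{2γ}-1)/(e^{4γ}-1))`. -/
theorem f_monotone
    (γ l : ℝ) (hγ : 0 < γ) (hl : 0 ≤ l) :
    MonotoneOn
      (fun z : ℝ => (1 - z) * ((1 - z) / (1 - Real.exp (2 * γ) * z)) ^ l +
        z * Real.exp (2 * γ * l))
      (Set.Ioo 0 ((Real.exp (2 * γ) - 1) / (Real.exp (4 * γ) - 1))) := by
  set a := Real.exp (2 * γ) with ha
  have ha1 : 1 < a := by
    rw [ha, show (1:ℝ) = Real.exp 0 by simp]
    exact Real.exp_lt_exp.mpr (by linarith)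
  have ha0 : 0 < a := by linarith
  have hC : Real.exp (2 * γ * l) = a ^ l := by
    rw [ha, Real.rpow_def_of_pos (Real.exp_pos _), Real.log_exp]
  have hend : (Real.exp (2 * γ) - 1) / (Real.exp (4 * γ) - 1) = 1 / (a + 1) := by
    have h4 : Real.exp (4 * γ) = a * a := by
      rw [ha, ← Real.exp_add]; ring_nf
    rw [h4, ← ha]
    rw [div_eq_div_iff (by nlinarith) (by linarith)]
    ring
  rw [hend]
  set s : Set ℝ := Set.Ioo 0 (1 / (a + 1)) with hs
  -- basic facts on the interval
  have hmem : ∀ x ∈ s, 0 < 1 - x ∧ 0 < 1 - a * x := by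
    intro x hx
    obtain ⟨hx0, hx1⟩ := hx
    have hx1' : x * (a + 1) < 1 := by
      rwa [lt_div_iff₀ (by linarith)] at hx1
    constructor
    · nlinarith
    · nlinarith
  -- derivative at each point of the interval
  have hderiv : ∀ x ∈ s,
      HasDerivAt (fun z : ℝ => (1 - z) * ((1 - z) / (1 - a * z)) ^ l +
        z * Real.exp (2 * γ * l))
        ((-1) * ((1 - x) / (1 - a * x)) ^ l +
          (1 - x) * (l * ((1 - x) / (1 - a * x)) ^ (l - 1) * ((a - 1) / (1 - a * x) ^ 2)) +
          Real.exp (2 * γ * l)) x := by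
    intro x hx
    obtain ⟨h1x, hax⟩ := hmem x hx
    have h1 : HasDerivAt (fun z : ℝ => 1 - z) (-1) x := by
      simpa using (hasDerivAt_id x).const_sub 1
    have h2 : HasDerivAt (fun z : ℝ => 1 - a * z) (-a) x := by
      simpa using ((hasDerivAt_id x).const_mul a).const_sub 1
    have hu : HasDerivAt (fun z : ℝ => (1 - z) / (1 - a * z))
        ((a - 1) / (1 - a * x) ^ 2) x := by
      have := h1.div h2 (ne_of_gt hax)
      rw [show (a - 1) / (1 - a * x) ^ 2 = (-1 * (1 - a * x) - (1 - x) * -a) / (1 - a * x) ^ 2 by ring]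
      exact this
    have hupos : 0 < (1 - x) / (1 - a * x) := div_pos h1x hax
    have hg : HasDerivAt (fun z : ℝ => ((1 - z) / (1 - a * z)) ^ l)
        (l * ((1 - x) / (1 - a * x)) ^ (l - 1) * ((a - 1) / (1 - a * x) ^ 2)) x := by
      have := hu.rpow_const (p := l) (Or.inl (ne_of_gt hupos))
      convert this using 1
      ring
    have hprod := h1.mul hg
    have hlin : HasDerivAt (fun z : ℝ => z * Real.exp (2 * γ * l))
        (Real.exp (2 * γ * l)) x := by
      simpa using (hasDerivAt_id x).mul_const (Real.exp (2 * γ * l))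
    have := hprod.add hlin
    exact this
  -- nonnegativity of the derivative
  have hnonneg : ∀ x ∈ s,
      0 ≤ (-1) * ((1 - x) / (1 - a * x)) ^ l +
          (1 - x) * (l * ((1 - x) / (1 - a * x)) ^ (l - 1) * ((a - 1) / (1 - a * x) ^ 2)) +
          Real.exp (2 * γ * l) := by
    intro x hx
    obtain ⟨h1x, hax⟩ := hmem x hx
    set r : ℝ := (1 - x) / (1 - a * x) with hr
    have hrpos : 0 < r := div_pos h1x hax
    have hrl : 0 < r ^ l := Real.rpow_pos_of_pos hrpos l
    have hrw : (1 - x) * (l * r ^ (l - 1) * ((a - 1) / (1 - a * x) ^ 2))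
        = l * r ^ l * (a * r - 1) := by
      have hrsub : r ^ (l - 1) = r ^ l / r := by
        rw [Real.rpow_sub hrpos, Real.rpow_one]
      rw [hrsub]
      generalize r ^ l = t
      rw [hr]
      have hd : 1 - a * x ≠ 0 := ne_of_gt hax
      field_simp
      linear_combination (-(l * t)) * mul_inv_cancel₀ hd
    rw [hrw, hC]
    have := key_ineq a r l (le_of_lt ha1) hrpos hl
    nlinarith [this]
  -- conclude
  have hdiff : DifferentiableOn ℝ
      (fun z : ℝ => (1 - z) * ((1 - z) / (1 - a * z)) ^ l + z * Real.exp (2 * γ * l)) s :=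
    fun x hx => ((hderiv x hx).differentiableAt).differentiableWithinAt
  apply monotoneOn_of_deriv_nonneg (convex_Ioo _ _) hdiff.continuousOn
  · rw [interior_Ioo]; exact hdiff
  · intro x hx
    rw [interior_Ioo] at hx
    rw [(hderiv x hx).deriv]
    exact hnonneg x hx
end

section
/- For fixed γ > 0, l ≥ 0, and z in (0, (e^{2γ}−1)/(e^{4γ}−1)), the function g(z,w) = (1−z)((1−w)/(1−e^{2γ}w))^l + z e^{2γl} is non-decreasing in w on the same interval, and non-decreasing in z. -/
open Real Set

/-- For fixed `γ > 0`, `l ≥ 0`, and `z` in `(0, (e^{2γ}-1)/(e^{4γ}-1))`, the function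
`g(z,w) = (1-z)((1-w)/(1-e^{2γ}w))^l + z e^{2γl}` is non-decreasing in `w` on the
same interval, and non-decreasing in `z`. -/
theorem g_monotone_in_each_variable
    (γ l : ℝ) (hγ : 0 < γ) (hl : 0 ≤ l) :
    (∀ z ∈ Set.Ioo (0 : ℝ) ((Real.exp (2 * γ) - 1) / (Real.exp (4 * γ) - 1)),
      MonotoneOn
        (fun w : ℝ => (1 - z) * ((1 - w) / (1 - Real.exp (2 * γ) * w)) ^ l +
          z * Real.exp (2 * γ * l))
        (Set.Ioo 0 ((Real.exp (2 * γ) - 1) / (Real.exp (4 * γ) - 1)))) ∧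
    (∀ w ∈ Set.Ioo (0 : ℝ) ((Real.exp (2 * γ) - 1) / (Real.exp (4 * γ) - 1)),
      MonotoneOn
        (fun z : ℝ => (1 - z) * ((1 - w) / (1 - Real.exp (2 * γ) * w)) ^ l +
          z * Real.exp (2 * γ * l))
        (Set.Ioo 0 ((Real.exp (2 * γ) - 1) / (Real.exp (4 * γ) - 1)))) := by
  set E := Real.exp (2 * γ) with hEdef
  have hE : 1 < E := by
    rw [hEdef, show (1:ℝ) = Real.exp 0 from Real.exp_zero.symm]
    exact Real.exp_lt_exp.mpr (by linarith)
  have h4 : Real.exp (4 * γ) = E * E := by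
    rw [hEdef, ← Real.exp_add]; ring_nf
  have hb : (E - 1) / (Real.exp (4 * γ) - 1) = 1 / (E + 1) := by
    rw [h4]
    rw [div_eq_div_iff (by nlinarith) (by nlinarith)]
    ring
  -- basic facts for points in the interval
  have hub : ∀ w : ℝ, w ∈ Set.Ioo (0 : ℝ) ((E - 1) / (Real.exp (4 * γ) - 1)) →
      0 < w ∧ w * (E + 1) < 1 := by
    intro w hw
    refine ⟨hw.1, ?_⟩
    have h2 := hw.2
    rw [hb] at h2
    have hE1 : (0:ℝ) < E + 1 := by linarith
    calc w * (E + 1) < (1 / (E + 1)) * (E + 1) := by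
          exact mul_lt_mul_of_pos_right h2 hE1
      _ = 1 := by field_simp
  have hden : ∀ w : ℝ, w ∈ Set.Ioo (0 : ℝ) ((E - 1) / (Real.exp (4 * γ) - 1)) →
      0 < 1 - E * w := by
    intro w hw
    obtain ⟨h0, h1⟩ := hub w hw
    nlinarith
  have hr1 : ∀ w : ℝ, w ∈ Set.Ioo (0 : ℝ) ((E - 1) / (Real.exp (4 * γ) - 1)) →
      1 ≤ (1 - w) / (1 - E * w) := by
    intro w hw
    obtain ⟨h0, h1⟩ := hub w hw
    rw [le_div_iff₀ (hden w hw)]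
    nlinarith
  have hrE : ∀ w : ℝ, w ∈ Set.Ioo (0 : ℝ) ((E - 1) / (Real.exp (4 * γ) - 1)) →
      (1 - w) / (1 - E * w) ≤ E := by
    intro w hw
    obtain ⟨h0, h1⟩ := hub w hw
    rw [div_le_iff₀ (hden w hw)]
    nlinarith
  have hexpl : Real.exp (2 * γ * l) = E ^ l := by
    rw [hEdef, ← Real.exp_mul]
  constructor
  · intro z hz w1 h1 w2 h2 h12
    have hz1 : 1 - z > 0 := by
      obtain ⟨hz0, hz2⟩ := hub z hz
      nlinarith
    have hrle : (1 - w1) / (1 - E * w1) ≤ (1 - w2) / (1 - E * w2) := by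
      rw [div_le_div_iff₀ (hden w1 h1) (hden w2 h2)]
      nlinarith [h1.1, h2.1]
    have hpow : ((1 - w1) / (1 - E * w1)) ^ l ≤ ((1 - w2) / (1 - E * w2)) ^ l :=
      Real.rpow_le_rpow (by linarith [hr1 w1 h1]) hrle hl
    simp only
    nlinarith [hpow]
  · intro w hw z1 h1 z2 h2 h12
    have hAB : ((1 - w) / (1 - E * w)) ^ l ≤ Real.exp (2 * γ * l) := by
      rw [hexpl]
      exact Real.rpow_le_rpow (by linarith [hr1 w hw]) (hrE w hw) hl
    simp only
    nlinarith [hAB]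
end

section
/- Suppose on neighboring databases d, d' the count vectors n(d), n(d') ∈ ℤ^m differ by at most 1 in each coordinate. Then the mechanism that outputs argmax_j { n_j + Lap(1/γ) } with independent Laplace noise in each coordinate satisfies (2γ, 0)-differential privacy. -/
open MeasureTheory ProbabilityTheory Real
open scoped ENNReal

lemma lap_density_meas (γ : ℝ) :
    Measurable (fun x : ℝ => ENNReal.ofReal (γ / 2 * Real.exp (-γ * |x|))) := by
  apply Measurable.ennreal_ofReal
  fun_prop

lemma lap_shift_key (γ : ℝ) (hγ : 0 < γ) (S S' : Set ℝ)
    (hS : MeasurableSet S) (hS' : MeasurableSet S')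
    (hsub : ∀ x : ℝ, x - 2 ∈ S → x ∈ S') :
    volume.withDensity (fun x => ENNReal.ofReal (γ / 2 * Real.exp (-γ * |x|))) S ≤
      ENNReal.ofReal (Real.exp (2 * γ)) *
        volume.withDensity (fun x => ENNReal.ofReal (γ / 2 * Real.exp (-γ * |x|))) S' := by
  set f : ℝ → ℝ≥0∞ := fun x => ENNReal.ofReal (γ / 2 * Real.exp (-γ * |x|)) with hf
  have hfm : Measurable f := lap_density_meas γ
  rw [withDensity_apply _ hS, withDensity_apply _ hS']
  have hmap : Measure.map (fun x : ℝ => x + (-2)) volume = volume :=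
    map_add_right_eq_self volume (-2)
  have h1 : ∫⁻ x in S, f x = ∫⁻ x in (fun x : ℝ => x + (-2)) ⁻¹' S, f (x + (-2)) := by
    conv_lhs => rw [← hmap]
    rw [setLIntegral_map hS hfm (measurable_add_const (-2))]
  rw [h1]
  have hkey : ∀ x : ℝ, f (x + (-2)) ≤ ENNReal.ofReal (Real.exp (2 * γ)) * f x := by
    intro x
    rw [hf]
    simp only
    rw [← ENNReal.ofReal_mul (Real.exp_nonneg _)]
    apply ENNReal.ofReal_le_ofReal
    have habs : |x| - 2 ≤ |x + (-2)| := by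
      have h := abs_sub_abs_le_abs_sub x (2 : ℝ)
      rw [abs_two] at h
      simpa [sub_eq_add_neg] using h
    have hexp : Real.exp (-γ * |x + (-2)|) ≤ Real.exp (2 * γ) * Real.exp (-γ * |x|) := by
      rw [← Real.exp_add]
      apply Real.exp_le_exp.mpr
      nlinarith
    calc γ / 2 * Real.exp (-γ * |x + (-2)|)
        ≤ γ / 2 * (Real.exp (2 * γ) * Real.exp (-γ * |x|)) := by
          apply mul_le_mul_of_nonneg_left hexp (by linarith)
      _ = Real.exp (2 * γ) * (γ / 2 * Real.exp (-γ * |x|)) := by ring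
  calc ∫⁻ x in (fun x : ℝ => x + (-2)) ⁻¹' S, f (x + (-2))
      ≤ ∫⁻ x in (fun x : ℝ => x + (-2)) ⁻¹' S, ENNReal.ofReal (Real.exp (2 * γ)) * f x :=
        setLIntegral_mono (hfm.const_mul _) (fun x _ => hkey x)
    _ = ENNReal.ofReal (Real.exp (2 * γ)) * ∫⁻ x in (fun x : ℝ => x + (-2)) ⁻¹' S, f x := by
        rw [lintegral_const_mul _ hfm]
    _ ≤ ENNReal.ofReal (Real.exp (2 * γ)) * ∫⁻ x in S', f x := by
        gcongr
        intro x hx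
        exact hsub x (by simpa [sub_eq_add_neg] using hx)

/-- If the count vectors on neighboring databases differ by at most 1 in each
coordinate, then reporting `argmax_j { n_j + Lap(1/γ) }` satisfies
`(2γ, 0)`-differential privacy: the probability of each output `j` under counts `n`
is at most `e^{2γ}` times its probability under counts `n'`. -/
theorem noisy_max_dp
    {Ω : Type*} [MeasureSpace Ω] [IsProbabilityMeasure (ℙ : Measure Ω)]
    {m : ℕ} (γ : ℝ) (hγ : 0 < γ) (n n' : Fin m → ℤ)
    (hneighbor : ∀ j, |n j - n' j| ≤ 1)
    (L : Fin m → Ω → ℝ) (hLmeas : ∀ j, Measurable (L j))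
    (hindep : iIndepFun L ℙ)
    (hpdf : ∀ j, Measure.map (L j) ℙ =
      volume.withDensity (fun x => ENNReal.ofReal (γ / 2 * Real.exp (-γ * |x|)))) :
    ∀ j : Fin m,
      ℙ {ω | ∀ i, i ≠ j → (n i : ℝ) + L i ω < (n j : ℝ) + L j ω} ≤
        ENNReal.ofReal (Real.exp (2 * γ)) *
          ℙ {ω | ∀ i, i ≠ j → (n' i : ℝ) + L i ω < (n' j : ℝ) + L j ω} := by
  intro j
  classical
  set T : Finset (Fin m) := Finset.univ.erase j with hT
  -- the tuple of the other coordinates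
  set Λ : Ω → (T → ℝ) := fun ω i => L i ω with hΛ
  have hΛmeas : Measurable Λ := measurable_pi_lambda _ fun i => hLmeas i
  -- independence of Λ and L j
  have hjT : IndepFun (fun ω (i : T) => L i ω) (fun ω (i : ({j} : Finset (Fin m))) => L i ω) ℙ :=
    hindep.indepFun_finset T {j} (by simp [hT]) hLmeas
  have hind : IndepFun Λ (L j) ℙ := by
    have := hjT.comp (measurable_id (α := T → ℝ))
      (measurable_pi_apply (⟨j, by simp⟩ : ({j} : Finset (Fin m))))
    exact this
  -- events in product form
  set Ecase : (Fin m → ℤ) → Set ((T → ℝ) × ℝ) :=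
    fun c => {p | ∀ i : T, (c i : ℝ) + p.1 i < (c j : ℝ) + p.2} with hE
  have hEmeas : ∀ c, MeasurableSet (Ecase c) := by
    intro c
    have : Ecase c = ⋂ i : T, {p : (T → ℝ) × ℝ | (c i : ℝ) + p.1 i < (c j : ℝ) + p.2} := by
      ext p; simp [hE, Set.mem_iInter]
    rw [this]
    exact MeasurableSet.iInter fun i => measurableSet_lt (by fun_prop) (by fun_prop)
  have hpre : ∀ c : Fin m → ℤ,
      (fun ω => (Λ ω, L j ω)) ⁻¹' Ecase c
        = {ω | ∀ i, i ≠ j → (c i : ℝ) + L i ω < (c j : ℝ) + L j ω} := by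
    intro c
    ext ω
    simp only [Set.mem_preimage, hE, Set.mem_setOf_eq]
    constructor
    · intro h i hi
      exact h ⟨i, by simp [hT, hi]⟩
    · intro h i
      exact h i (Finset.mem_erase.mp i.2).1
  set ν : Measure (T → ℝ) := Measure.map Λ ℙ with hν
  set μ : Measure ℝ := Measure.map (L j) ℙ with hμ
  haveI : IsProbabilityMeasure ν := Measure.isProbabilityMeasure_map hΛmeas.aemeasurable
  haveI : IsProbabilityMeasure μ := Measure.isProbabilityMeasure_map (hLmeas j).aemeasurable
  have hprod : Measure.map (fun ω => (Λ ω, L j ω)) ℙ = ν.prod μ :=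
    (indepFun_iff_map_prod_eq_prod_map_map hΛmeas.aemeasurable
      (hLmeas j).aemeasurable).mp hind
  have hcalc : ∀ c : Fin m → ℤ,
      ℙ {ω | ∀ i, i ≠ j → (c i : ℝ) + L i ω < (c j : ℝ) + L j ω}
        = ∫⁻ ℓ, μ (Prod.mk ℓ ⁻¹' Ecase c) ∂ν := by
    intro c
    rw [← hpre c, ← Measure.map_apply (hΛmeas.prodMk (hLmeas j)) (hEmeas c), hprod,
      Measure.prod_apply (hEmeas c)]
  rw [hcalc n, hcalc n']
  rw [← lintegral_const_mul _ (measurable_measure_prodMk_left (hEmeas n'))]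
  apply lintegral_mono
  intro ℓ
  have hμd : μ = volume.withDensity (fun x => ENNReal.ofReal (γ / 2 * Real.exp (-γ * |x|))) :=
    hpdf j
  rw [hμd]
  apply lap_shift_key γ hγ
  · exact (hEmeas n).preimage measurable_prodMk_left
  · exact (hEmeas n').preimage measurable_prodMk_left
  · intro x hx
    intro i
    have h1 := hx i
    simp only [hE, Set.mem_preimage, Set.mem_setOf_eq] at h1 ⊢
    have hi1 : |n i.1 - n' i.1| ≤ 1 := hneighbor i.1
    have hj1 : |n j - n' j| ≤ 1 := hneighbor j
    rw [abs_le] at hi1 hj1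
    have hi2 : (n' i.1 : ℝ) ≤ (n i.1 : ℝ) + 1 := by exact_mod_cast by omega
    have hj2 : (n j : ℝ) - 1 ≤ (n' j : ℝ) := by exact_mod_cast by omega
    linarith
end

section
/- If a mechanism M satisfies (2γ, 0)-differential privacy, then for every integer l ≥ 0 and all neighbors d, d', the log-moment of the privacy loss satisfies α(l; d, d') ≤ 2γ² l(l+1). -/
open Real

private lemma aux_sinh_le {x : ℝ} (hx : 0 ≤ x) : Real.sinh x ≤ x * Real.cosh x := by
  have hder : ∀ y : ℝ, HasDerivAt (fun t => t * Real.cosh t - Real.sinh t)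
      (y * Real.sinh y) y := by
    intro y
    have h1 := (hasDerivAt_id y).mul (Real.hasDerivAt_cosh y)
    have h2 := h1.sub (Real.hasDerivAt_sinh y)
    simp only [id_eq, one_mul] at h2
    exact h2.congr_deriv (by ring)
  have mono : MonotoneOn (fun t => t * Real.cosh t - Real.sinh t) (Set.Ici 0) := by
    apply monotoneOn_of_deriv_nonneg (convex_Ici 0)
    · exact ((continuous_id.mul Real.continuous_cosh).sub Real.continuous_sinh).continuousOn
    · intro y _
      exact (hder y).differentiableAt.differentiableWithinAt
    · intro y hy
      rw [interior_Ici] at hy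
      rw [(hder y).deriv]
      exact mul_nonneg (le_of_lt hy) (Real.sinh_nonneg_iff.2 (le_of_lt hy))
  have := mono Set.self_mem_Ici hx hx
  simpa using this

private lemma aux_cosh_le {A B : ℝ} (hB : 0 ≤ B) (hAB : B ≤ A) :
    Real.cosh A ≤ Real.cosh B * Real.exp ((A ^ 2 - B ^ 2) / 2) := by
  have hder : ∀ y : ℝ, HasDerivAt (fun t => Real.cosh t * Real.exp (-(t ^ 2 / 2)))
      ((Real.sinh y - y * Real.cosh y) * Real.exp (-(y ^ 2 / 2))) y := by
    intro y
    have hinner : HasDerivAt (fun t : ℝ => -(t ^ 2 / 2)) (-y) y := by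
      have := ((hasDerivAt_pow 2 y).div_const 2).neg
      exact this.congr_deriv (by norm_num)
    have h2 := hinner.exp
    have h3 := (Real.hasDerivAt_cosh y).mul h2
    exact h3.congr_deriv (by ring)
  have anti : AntitoneOn (fun t => Real.cosh t * Real.exp (-(t ^ 2 / 2))) (Set.Ici 0) := by
    apply antitoneOn_of_deriv_nonpos (convex_Ici 0)
    · exact (Real.continuous_cosh.mul ((continuous_pow 2).div_const 2).neg.rexp).continuousOn
    · intro y _
      exact (hder y).differentiableAt.differentiableWithinAt
    · intro y hy
      rw [interior_Ici] at hy
      rw [(hder y).deriv]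
      have h1 : Real.sinh y - y * Real.cosh y ≤ 0 := sub_nonpos.2 (aux_sinh_le (le_of_lt hy))
      exact mul_nonpos_of_nonpos_of_nonneg h1 (Real.exp_nonneg _)
  have h := anti (Set.mem_Ici.2 hB) (Set.mem_Ici.2 (hB.trans hAB)) hAB
  have hE : (0:ℝ) < Real.exp (A ^ 2 / 2) := Real.exp_pos _
  calc Real.cosh A = (Real.cosh A * Real.exp (-(A ^ 2 / 2))) * Real.exp (A ^ 2 / 2) := by
        rw [mul_assoc, ← Real.exp_add]; simp
    _ ≤ (Real.cosh B * Real.exp (-(B ^ 2 / 2))) * Real.exp (A ^ 2 / 2) :=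
        mul_le_mul_of_nonneg_right h hE.le
    _ = Real.cosh B * Real.exp ((A ^ 2 - B ^ 2) / 2) := by
        rw [mul_assoc, ← Real.exp_add]
        ring_nf

private lemma aux_exp_pair {A B : ℝ} (hB : 0 ≤ B) (hAB : B ≤ A) :
    Real.exp A + Real.exp (-A) ≤
      (Real.exp B + Real.exp (-B)) * Real.exp ((A ^ 2 - B ^ 2) / 2) := by
  have h := aux_cosh_le hB hAB
  rw [Real.cosh_eq, Real.cosh_eq, div_mul_eq_mul_div] at h
  linarith

private lemma aux_chord (k : ℕ) {a b y : ℝ} (ha : 0 ≤ a) (hy1 : a ≤ y) (hy2 : y ≤ b) :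
    (b - a) * y ^ k ≤ (b - y) * a ^ k + (y - a) * b ^ k := by
  rcases eq_or_lt_of_le (hy1.trans hy2) with hab | hab
  · have h1 : y = a := le_antisymm (hab ▸ hy2) hy1
    subst hab
    simp [h1]
  · have hba : (0:ℝ) < b - a := sub_pos.2 hab
    have h := (convexOn_pow k).2 (Set.mem_Ici.2 ha) (Set.mem_Ici.2 (ha.trans (hy1.trans hy2)))
        (div_nonneg (sub_nonneg.2 hy2) hba.le)
        (div_nonneg (sub_nonneg.2 hy1) hba.le)
        (by field_simp; ring)
    rw [smul_eq_mul, smul_eq_mul, smul_eq_mul, smul_eq_mul] at h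
    have hyy : (b - y) / (b - a) * a + (y - a) / (b - a) * b = y := by
      field_simp
      ring
    rw [hyy] at h
    rw [div_mul_eq_mul_div, div_mul_eq_mul_div, ← add_div] at h
    have h2 := mul_le_mul_of_nonneg_left h hba.le
    rwa [mul_div_cancel₀ _ (ne_of_gt hba)] at h2

private lemma aux_final {γ : ℝ} (hγ : 0 ≤ γ) (l : ℕ) :
    Real.exp (2 * γ) * Real.exp (-(2 * γ)) ^ (l + 1)
      - Real.exp (-(2 * γ)) * Real.exp (2 * γ) ^ (l + 1)
      + (Real.exp (2 * γ) ^ (l + 1) - Real.exp (-(2 * γ)) ^ (l + 1))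
    ≤ (Real.exp (2 * γ) - Real.exp (-(2 * γ))) * Real.exp (2 * γ ^ 2 * l * (l + 1)) := by
  set ε := 2 * γ with hεdef
  have hε : 0 ≤ ε := by positivity
  have hpair := aux_exp_pair (B := ε / 2) (A := ((l : ℝ) + 1 / 2) * ε)
    (by positivity) (by nlinarith [Nat.cast_nonneg (α := ℝ) l])
  -- multiply by exp (-(ε/2)) ≥ 0
  have h2 := mul_le_mul_of_nonneg_right hpair (Real.exp_nonneg (-(ε / 2)))
  have hEeq : ((((l : ℝ) + 1 / 2) * ε) ^ 2 - (ε / 2) ^ 2) / 2 = 2 * γ ^ 2 * l * (l + 1) := by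
    rw [hεdef]; ring
  rw [hEeq] at h2
  set E := Real.exp (2 * γ ^ 2 * l * (l + 1)) with hE
  have hL : (Real.exp (((l : ℝ) + 1 / 2) * ε) + Real.exp (-(((l : ℝ) + 1 / 2) * ε)))
      * Real.exp (-(ε / 2))
      = Real.exp ((l : ℝ) * ε) + Real.exp (-(((l : ℝ) + 1) * ε)) := by
    rw [add_mul, ← Real.exp_add, ← Real.exp_add]
    ring_nf
  have hR : Real.exp (ε / 2) + Real.exp (-(ε / 2)) > 0 := by positivity
  have hR2 : (Real.exp (ε / 2) + Real.exp (-(ε / 2))) * E * Real.exp (-(ε / 2))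
      = (1 + Real.exp (-ε)) * E := by
    rw [mul_right_comm, add_mul, ← Real.exp_add, ← Real.exp_add]
    ring_nf
    rw [Real.exp_zero]
    ring
  rw [hL, hR2] at h2
  -- h2 : exp (l ε) + exp (-(l+1) ε) ≤ (1 + exp (-ε)) * E
  have hfac : 0 ≤ Real.exp ε - 1 := by
    have := Real.one_le_exp hε
    linarith
  have h3 := mul_le_mul_of_nonneg_left h2 hfac
  -- now rewrite goal in terms of exps
  have e1 : Real.exp (-ε) ^ (l + 1) = Real.exp (-(((l : ℝ) + 1) * ε)) := by
    rw [← Real.exp_nat_mul]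
    push_cast
    ring_nf
  have e2 : Real.exp ε ^ (l + 1) = Real.exp (((l : ℝ) + 1) * ε) := by
    rw [← Real.exp_nat_mul]
    push_cast
    ring_nf
  rw [e1, e2]
  have k1 : Real.exp ε * Real.exp (-(((l : ℝ) + 1) * ε)) = Real.exp (-((l : ℝ) * ε)) := by
    rw [← Real.exp_add]; ring_nf
  have k2 : Real.exp (-ε) * Real.exp (((l : ℝ) + 1) * ε) = Real.exp ((l : ℝ) * ε) := by
    rw [← Real.exp_add]; ring_nf
  rw [k1, k2]
  -- goal: exp(-lε) - exp(lε) + (exp((l+1)ε) - exp(-(l+1)ε)) ≤ (exp ε - exp (-ε)) * E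
  -- expand h3
  have k3 : Real.exp ε * Real.exp ((l : ℝ) * ε) = Real.exp (((l : ℝ) + 1) * ε) := by
    rw [← Real.exp_add]; ring_nf
  have k4 : Real.exp ε * Real.exp (-(((l : ℝ) + 1) * ε)) = Real.exp (-((l : ℝ) * ε)) := k1
  have k5 : Real.exp ε * Real.exp (-ε) = 1 := by rw [← Real.exp_add]; simp
  nlinarith [h3, k3, k4, k5, Real.exp_pos ((l:ℝ) * ε), Real.exp_pos (-(((l:ℝ)+1) * ε)),
    Real.exp_pos (2 * γ ^ 2 * l * (l + 1))]

/-- If `M` satisfies `(2γ, 0)`-differential privacy (in both directions between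
neighbors `d` and `d'`), then for every integer `l ≥ 0` the `l`-th log-moment of the
privacy loss satisfies `α(l; d, d') ≤ 2γ² l(l+1)`. -/
theorem moment_bound_from_pure_dp
    {R : Type*} (γ : ℝ) (hγ : 0 ≤ γ) (P Q : PMF R)
    (hdp : ∀ o : R, P o ≤ ENNReal.ofReal (Real.exp (2 * γ)) * Q o)
    (hdp' : ∀ o : R, Q o ≤ ENNReal.ofReal (Real.exp (2 * γ)) * P o)
    (l : ℕ) :
    Real.log (∑' o : R, (P o).toReal * ((P o).toReal / (Q o).toReal) ^ (l : ℝ)) ≤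
      2 * γ ^ 2 * l * (l + 1) := by
  have hpq : ∀ o, (P o).toReal ≤ Real.exp (2 * γ) * (Q o).toReal := by
    intro o
    have h1 : (P o).toReal ≤ (ENNReal.ofReal (Real.exp (2 * γ)) * Q o).toReal :=
      ENNReal.toReal_mono (ENNReal.mul_ne_top ENNReal.ofReal_ne_top (PMF.apply_ne_top Q o)) (hdp o)
    rwa [ENNReal.toReal_mul, ENNReal.toReal_ofReal (Real.exp_nonneg _)] at h1
  have hqp : ∀ o, (Q o).toReal ≤ Real.exp (2 * γ) * (P o).toReal := by
    intro o
    have h1 : (Q o).toReal ≤ (ENNReal.ofReal (Real.exp (2 * γ)) * P o).toReal :=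
      ENNReal.toReal_mono (ENNReal.mul_ne_top ENNReal.ofReal_ne_top (PMF.apply_ne_top P o)) (hdp' o)
    rwa [ENNReal.toReal_mul, ENNReal.toReal_ofReal (Real.exp_nonneg _)] at h1
  have sumP : ∑' o, (P o).toReal = 1 := by
    rw [← ENNReal.tsum_toReal_eq (fun o => PMF.apply_ne_top P o), P.tsum_coe, ENNReal.toReal_one]
  have sumQ : ∑' o, (Q o).toReal = 1 := by
    rw [← ENNReal.tsum_toReal_eq (fun o => PMF.apply_ne_top Q o), Q.tsum_coe, ENNReal.toReal_one]
  have hsP : Summable fun o => (P o).toReal :=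
    ENNReal.summable_toReal (by rw [P.tsum_coe]; exact ENNReal.one_ne_top)
  have hsQ : Summable fun o => (Q o).toReal :=
    ENNReal.summable_toReal (by rw [Q.tsum_coe]; exact ENNReal.one_ne_top)
  rcases eq_or_lt_of_le hγ with h0 | hγpos
  · -- γ = 0
    have hPQ : ∀ o, (P o).toReal = (Q o).toReal := by
      intro o
      have h1 := hpq o
      have h2 := hqp o
      rw [← h0] at h1 h2
      norm_num [Real.exp_zero] at h1 h2
      linarith
    have hf : ∀ o, (P o).toReal * ((P o).toReal / (Q o).toReal) ^ (l : ℝ) = (P o).toReal := by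
      intro o
      by_cases hp : (P o).toReal = 0
      · simp [hp]
      · have : (P o).toReal / (Q o).toReal = 1 := by
          rw [← hPQ o]
          exact div_self hp
        rw [this, Real.one_rpow, mul_one]
    rw [tsum_congr hf, sumP, Real.log_one]
    positivity
  · -- γ > 0
    have hba : Real.exp (-(2 * γ)) < Real.exp (2 * γ) := Real.exp_lt_exp.2 (by linarith)
    have hba' : (0:ℝ) < Real.exp (2 * γ) - Real.exp (-(2 * γ)) := sub_pos.2 hba
    set c := Real.exp (2 * γ) - Real.exp (-(2 * γ)) with hc
    set c0 := Real.exp (2 * γ) * Real.exp (-(2 * γ)) ^ (l + 1)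
      - Real.exp (-(2 * γ)) * Real.exp (2 * γ) ^ (l + 1) with hc0
    set c1 := Real.exp (2 * γ) ^ (l + 1) - Real.exp (-(2 * γ)) ^ (l + 1) with hc1
    have hfnn : ∀ o, 0 ≤ (P o).toReal * ((P o).toReal / (Q o).toReal) ^ (l : ℝ) := by
      intro o
      exact mul_nonneg ENNReal.toReal_nonneg
        (Real.rpow_nonneg (div_nonneg ENNReal.toReal_nonneg ENNReal.toReal_nonneg) _)
    have key : ∀ o, c * ((P o).toReal * ((P o).toReal / (Q o).toReal) ^ (l : ℝ))
        ≤ c0 * (Q o).toReal + c1 * (P o).toReal := by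
      intro o
      have hdpq := hpq o
      have hdqp := hqp o
      set p := (P o).toReal with hp
      set q := (Q o).toReal with hq
      have hp0 : 0 ≤ p := ENNReal.toReal_nonneg
      have hq0 : 0 ≤ q := ENNReal.toReal_nonneg
      by_cases hqz : q = 0
      · have hpz : p = 0 := le_antisymm (by simpa [hqz] using hdpq) hp0
        simp [hpz, hqz]
      · have hqpos : 0 < q := lt_of_le_of_ne hq0 (Ne.symm hqz)
        set y := p / q with hy
        have hy2 : y ≤ Real.exp (2 * γ) := by
          rw [hy, div_le_iff₀ hqpos]
          linarith [hdpq]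
        have hy1 : Real.exp (-(2 * γ)) ≤ y := by
          rw [hy, le_div_iff₀ hqpos]
          have h1 := hdqp
          have h2 : Real.exp (-(2 * γ)) * Real.exp (2 * γ) = 1 := by
            rw [← Real.exp_add]; simp
          nlinarith [Real.exp_pos (-(2 * γ))]
        have hchord := aux_chord (l + 1) (Real.exp_nonneg (-(2 * γ))) hy1 hy2
        have hpy : p = q * y := by
          rw [hy, mul_div_cancel₀ _ hqz]
        have hrp : ((p / q) ^ (l : ℝ) : ℝ) = y ^ l := by
          rw [← hy, Real.rpow_natCast]
        rw [hrp]
        have hstep : p * y ^ l = q * y ^ (l + 1) := by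
          rw [hpy, pow_succ]
          ring
        calc c * (p * y ^ l) = q * ((Real.exp (2 * γ) - Real.exp (-(2 * γ))) * y ^ (l + 1)) := by
              rw [hstep, hc]; ring
          _ ≤ q * ((Real.exp (2 * γ) - y) * Real.exp (-(2 * γ)) ^ (l + 1)
                + (y - Real.exp (-(2 * γ))) * Real.exp (2 * γ) ^ (l + 1)) :=
              mul_le_mul_of_nonneg_left hchord hq0
          _ = c0 * q + c1 * p := by
              rw [hc0, hc1, hpy]; ring
    -- summability
    have hsg : Summable fun o => c0 * (Q o).toReal + c1 * (P o).toReal :=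
      (hsQ.mul_left c0).add (hsP.mul_left c1)
    have hsf : Summable fun o => c * ((P o).toReal * ((P o).toReal / (Q o).toReal) ^ (l : ℝ)) :=
      Summable.of_nonneg_of_le (fun o => mul_nonneg hba'.le (hfnn o)) key hsg
    have hsum : c * (∑' o, (P o).toReal * ((P o).toReal / (Q o).toReal) ^ (l : ℝ)) ≤ c0 + c1 := by
      rw [← tsum_mul_left]
      calc (∑' o, c * ((P o).toReal * ((P o).toReal / (Q o).toReal) ^ (l : ℝ)))
          ≤ ∑' o, (c0 * (Q o).toReal + c1 * (P o).toReal) := Summable.tsum_le_tsum key hsf hsg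
        _ = c0 * (∑' o, (Q o).toReal) + c1 * (∑' o, (P o).toReal) := by
            rw [Summable.tsum_add (hsQ.mul_left c0) (hsP.mul_left c1), tsum_mul_left, tsum_mul_left]
        _ = c0 + c1 := by rw [sumP, sumQ]; ring
    have hfin : c0 + c1 ≤ c * Real.exp (2 * γ ^ 2 * l * (l + 1)) := aux_final hγ l
    have hS : (∑' o, (P o).toReal * ((P o).toReal / (Q o).toReal) ^ (l : ℝ))
        ≤ Real.exp (2 * γ ^ 2 * l * (l + 1)) := by
      have := hsum.trans hfin
      exact le_of_mul_le_mul_left this hba'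
    have hSnn : 0 ≤ ∑' o, (P o).toReal * ((P o).toReal / (Q o).toReal) ^ (l : ℝ) :=
      tsum_nonneg hfnn
    rcases eq_or_lt_of_le hSnn with hS0 | hSpos
    · rw [← hS0, Real.log_zero]
      positivity
    · rw [Real.log_le_iff_le_exp hSpos]
      exact hS
end

section
/- If a random variable C satisfies |C| ≤ ε almost surely and E[e^C] ≤ 1 (as holds for a privacy loss random variable), then log E[exp(lC)] ≤ l(l+1)ε²/2 for all l ≥ 0. -/
open MeasureTheory ProbabilityTheory Real

/-- Convexity bound: for `|x| ≤ a`, `exp x ≤ cosh a + (sinh a / a) * x`. -/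
lemma exp_le_cosh_add_sinh_mul {a x : ℝ} (ha : 0 < a) (hx : |x| ≤ a) :
    Real.exp x ≤ Real.cosh a + (Real.sinh a / a) * x := by
  obtain ⟨hx1, hx2⟩ := abs_le.mp hx
  set θ : ℝ := (a + x) / (2 * a) with hθ
  have hθ0 : 0 ≤ θ := by
    apply div_nonneg <;> linarith
  have hθ1 : 0 ≤ 1 - θ := by
    rw [hθ]
    rw [sub_nonneg, div_le_one (by linarith)]
    linarith
  have hsum : θ + (1 - θ) = 1 := by ring
  have hcomb : θ • a + (1 - θ) • (-a) = x := by
    simp only [smul_eq_mul, hθ]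
    field_simp
    ring
  have hconv := convexOn_exp.2 (Set.mem_univ a) (Set.mem_univ (-a)) hθ0 hθ1 hsum
  rw [hcomb] at hconv
  refine hconv.trans (le_of_eq ?_)
  rw [Real.cosh_eq, Real.sinh_eq]
  simp only [smul_eq_mul, hθ]
  field_simp
  ring

/-- If `|C| ≤ ε` almost surely and `E[e^C] ≤ 1`, then
`log E[exp(l C)] ≤ l(l+1)ε²/2` for all `l ≥ 0`. -/
theorem bounded_loss_moment_bound
    {Ω : Type*} [MeasureSpace Ω] [IsProbabilityMeasure (ℙ : Measure Ω)]
    (C : Ω → ℝ) (hC : Measurable C) (ε : ℝ) (hε : 0 < ε)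
    (hbound : ∀ᵐ ω ∂(volume : Measure Ω), |C ω| ≤ ε)
    (hexp : (∫ ω, Real.exp (C ω) ∂(volume : Measure Ω)) ≤ 1)
    (l : ℝ) (hl : 0 ≤ l) :
    Real.log (∫ ω, Real.exp (l * C ω) ∂(volume : Measure Ω)) ≤ l * (l + 1) * ε ^ 2 / 2 := by
  -- trivial case l = 0
  rcases eq_or_lt_of_le hl with hl0 | hl0
  · subst hl0
    simp [measure_univ]
  -- C is integrable
  have hCint : Integrable C (volume : Measure Ω) := by
    refine (integrable_const ε).mono' hC.aestronglyMeasurable ?_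
    filter_upwards [hbound] with ω h using by simpa using h
  -- exp (C) is integrable
  have hexpCint : Integrable (fun ω => Real.exp (C ω)) (volume : Measure Ω) := by
    refine (integrable_const (Real.exp ε)).mono'
      (hC.exp.aestronglyMeasurable) ?_
    filter_upwards [hbound] with ω h
    rw [Real.norm_eq_abs, abs_of_pos (Real.exp_pos _)]
    exact Real.exp_le_exp.mpr ((le_abs_self _).trans h)
  -- exp (l * C) is integrable
  have hexplCint : Integrable (fun ω => Real.exp (l * C ω)) (volume : Measure Ω) := by
    refine (integrable_const (Real.exp (l * ε))).mono'
      ((hC.const_mul l).exp.aestronglyMeasurable) ?_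
    filter_upwards [hbound] with ω h
    rw [Real.norm_eq_abs, abs_of_pos (Real.exp_pos _)]
    exact Real.exp_le_exp.mpr (by
      calc l * C ω ≤ l * |C ω| := by nlinarith [le_abs_self (C ω)]
      _ ≤ l * ε := by nlinarith)
  -- E[C] ≤ 0
  have hEC : (∫ ω, C ω ∂(volume : Measure Ω)) ≤ 0 := by
    have h1 : (∫ ω, (1 + C ω) ∂(volume : Measure Ω)) ≤
        ∫ ω, Real.exp (C ω) ∂(volume : Measure Ω) := by
      refine integral_mono ((integrable_const 1).add hCint) hexpCint ?_
      intro ω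
      exact Real.add_one_le_exp (C ω) |>.trans_eq' (by ring_nf)
    rw [integral_add (integrable_const 1) hCint, integral_const, probReal_univ] at h1
    simp at h1
    linarith
  -- pointwise bound then integrate
  have hkey : (∫ ω, Real.exp (l * C ω) ∂(volume : Measure Ω)) ≤
      Real.cosh (l * ε) + (Real.sinh (l * ε) / ε) * ∫ ω, C ω ∂(volume : Measure Ω) := by
    have hmono : (∫ ω, Real.exp (l * C ω) ∂(volume : Measure Ω)) ≤
        ∫ ω, (Real.cosh (l * ε) + (Real.sinh (l * ε) / ε) * C ω) ∂(volume : Measure Ω) := by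
      refine integral_mono_ae hexplCint
        ((integrable_const _).add (hCint.const_mul _)) ?_
      filter_upwards [hbound] with ω h
      have hla : 0 < l * ε := mul_pos hl0 hε
      have habs : |l * C ω| ≤ l * ε := by
        rw [abs_mul, abs_of_pos hl0]
        exact mul_le_mul_of_nonneg_left h hl
      have := exp_le_cosh_add_sinh_mul hla habs
      calc Real.exp (l * C ω) ≤ Real.cosh (l * ε) + (Real.sinh (l * ε) / (l * ε)) * (l * C ω) :=
            this
        _ = Real.cosh (l * ε) + (Real.sinh (l * ε) / ε) * C ω := by
            field_simp
    rwa [integral_add (integrable_const _) (hCint.const_mul _), integral_const,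
      probReal_univ, smul_eq_mul, one_mul,
      integral_const_mul] at hmono
  have hsinh : 0 ≤ Real.sinh (l * ε) := Real.sinh_nonneg_iff.mpr (by positivity)
  have hcosh : (∫ ω, Real.exp (l * C ω) ∂(volume : Measure Ω)) ≤ Real.cosh (l * ε) := by
    have : (Real.sinh (l * ε) / ε) * ∫ ω, C ω ∂(volume : Measure Ω) ≤ 0 :=
      mul_nonpos_of_nonneg_of_nonpos (by positivity) hEC
    linarith
  have hfinal : (∫ ω, Real.exp (l * C ω) ∂(volume : Measure Ω)) ≤
      Real.exp (l * (l + 1) * ε ^ 2 / 2) := by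
    refine hcosh.trans ((Real.cosh_le_exp_half_sq (l * ε)).trans ?_)
    apply Real.exp_le_exp.mpr
    nlinarith [sq_nonneg l, sq_nonneg ε]
  calc Real.log (∫ ω, Real.exp (l * C ω) ∂(volume : Measure Ω))
      ≤ Real.log (Real.exp (l * (l + 1) * ε ^ 2 / 2)) := by
        rcases eq_or_lt_of_le (integral_nonneg (μ := (volume : Measure Ω)) (f := fun ω => Real.exp (l * C ω)) (fun ω => (Real.exp_pos _).le)) with h0 | h0
        · rw [← h0, Real.log_zero]
          exact Real.log_nonneg (Real.one_le_exp (by positivity))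
        · exact Real.log_le_log h0 hfinal
    _ = l * (l + 1) * ε ^ 2 / 2 := Real.log_exp _
end

section
/- In the noisy-max mechanism with m = 2 classes and counts n₁ > n₂, the probability that the output is not class 1 is at most (2 + γ(n₁ − n₂)) e^{-γ(n₁−n₂)}/4, and this bound is tight (achieved with equality). -/
open MeasureTheory ProbabilityTheory Real Set Filter

lemma tendsto_exp_neg_mul {c : ℝ} (hc : 0 < c) :
    Tendsto (fun x => Real.exp (-(c * x))) atTop (nhds 0) :=
  Real.tendsto_exp_atBot.comp (tendsto_neg_atBot_iff.mpr (tendsto_id.const_mul_atTop hc))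

lemma expIoi {c : ℝ} (hc : 0 < c) (a : ℝ) :
    ∫ x in Ioi a, Real.exp (-(c * x)) = Real.exp (-(c * a)) / c := by
  have h : ∫ x in Ioi a, Real.exp (-(c * x)) = 0 - (-Real.exp (-(c * a)) / c) := by
    refine integral_Ioi_of_hasDerivAt_of_tendsto' (f := fun x => -Real.exp (-(c * x)) / c)
      (fun x _ => ?_) ?_ ?_
    · have h1 : HasDerivAt (fun x : ℝ => -(c * x)) (-c) x := by
        simpa using (hasDerivAt_id x).const_mul (-c)
      have := (h1.exp.fun_neg.div_const c)
      refine this.congr_deriv ?_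
      field_simp
    · simpa [neg_mul] using exp_neg_integrableOn_Ioi a hc
    · simpa using ((tendsto_exp_neg_mul hc).neg.div_const c)
  rw [h]; ring

lemma expIic {c : ℝ} (hc : 0 < c) (a : ℝ) :
    ∫ x in Iic a, Real.exp (c * x) = Real.exp (c * a) / c := by
  have h := integral_comp_neg_Iic (f := fun x => Real.exp (-(c * x))) a
  simp only [mul_neg, neg_neg] at h
  rw [h, expIoi hc, mul_neg, neg_neg]

lemma integrableOn_exp_mul_Iic' {c : ℝ} (hc : 0 < c) (a : ℝ) :
    IntegrableOn (fun x => Real.exp (c * x)) (Iic a) := by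
  have A : MeasurableEmbedding fun x : ℝ => -x :=
    (Homeomorph.neg ℝ).isClosedEmbedding.measurableEmbedding
  have hpre : (fun x : ℝ => -x) ⁻¹' Ici (-a) = Iic a := by
    ext x; simp
  have hmap : Measure.map (fun x : ℝ => -x) (volume.restrict (Iic a))
      = volume.restrict (Ici (-a)) := by
    rw [← hpre, ← Measure.restrict_map A.measurable measurableSet_Ici,
      Measure.map_neg_eq_self]
  have h1 : IntegrableOn (fun x => Real.exp (-(c * x))) (Ici (-a)) := by
    rw [integrableOn_Ici_iff_integrableOn_Ioi]
    simpa [neg_mul] using exp_neg_integrableOn_Ioi (-a) hc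
  rw [IntegrableOn, ← hmap, A.integrable_map_iff] at h1
  simpa [Function.comp_def, IntegrableOn] using h1

lemma integrableOn_exp_neg_Ici {c : ℝ} (hc : 0 < c) (a : ℝ) :
    IntegrableOn (fun x => Real.exp (-(c * x))) (Ici a) := by
  rw [integrableOn_Ici_iff_integrableOn_Ioi]
  simpa [neg_mul] using exp_neg_integrableOn_Ioi a hc

variable {γ : ℝ}

lemma fr_Iic (hγ : 0 < γ) {a : ℝ} (ha : a ≤ 0) :
    ∫ x in Iic a, γ / 2 * Real.exp (-γ * |x|) = Real.exp (γ * a) / 2 := by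
  have hEq : EqOn (fun x => γ / 2 * Real.exp (-γ * |x|))
      (fun x => γ / 2 * Real.exp (γ * x)) (Iic a) := by
    intro x hx
    have hx0 : x ≤ 0 := le_trans hx ha
    simp only [abs_of_nonpos hx0]
    ring_nf
  rw [setIntegral_congr_fun measurableSet_Iic hEq, integral_const_mul, expIic hγ]
  field_simp

lemma fr_Ici (hγ : 0 < γ) {a : ℝ} (ha : 0 ≤ a) :
    ∫ x in Ici a, γ / 2 * Real.exp (-γ * |x|) = Real.exp (-(γ * a)) / 2 := by
  have hEq : EqOn (fun x => γ / 2 * Real.exp (-γ * |x|))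
      (fun x => γ / 2 * Real.exp (-(γ * x))) (Ici a) := by
    intro x hx
    have hx0 : (0:ℝ) ≤ x := le_trans ha hx
    simp only [abs_of_nonneg hx0, neg_mul]
  rw [setIntegral_congr_fun measurableSet_Ici hEq, integral_Ici_eq_integral_Ioi,
    integral_const_mul, expIoi hγ]
  field_simp

lemma fr_integrableOn_Iic (hγ : 0 < γ) (a : ℝ) :
    IntegrableOn (fun x => γ / 2 * Real.exp (-γ * |x|)) (Iic a) := by
  rcases le_or_gt a 0 with h | h
  · have hI : IntegrableOn (fun x => γ / 2 * Real.exp (γ * x)) (Iic a) volume :=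
      (integrableOn_exp_mul_Iic hγ a).const_mul (γ/2)
    refine hI.congr_fun ?_ measurableSet_Iic
    intro x hx
    have hx0 : x ≤ 0 := le_trans hx h
    simp only [abs_of_nonpos hx0, mul_neg, neg_mul, neg_neg]
  · rw [← Iic_union_Ioc_eq_Iic (le_of_lt h)]
    refine IntegrableOn.union ?_ ?_
    · have hI : IntegrableOn (fun x => γ / 2 * Real.exp (γ * x)) (Iic (0:ℝ)) volume :=
        (integrableOn_exp_mul_Iic hγ 0).const_mul (γ/2)
      refine hI.congr_fun ?_ measurableSet_Iic
      intro x hx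
      simp only [mem_Iic] at hx
      simp only [abs_of_nonpos hx, mul_neg, neg_mul, neg_neg]
    · exact Continuous.integrableOn_Ioc (by continuity)

lemma fr_integrableOn_Ici (hγ : 0 < γ) (a : ℝ) :
    IntegrableOn (fun x => γ / 2 * Real.exp (-γ * |x|)) (Ici a) := by
  rcases le_or_gt 0 a with h | h
  · have hI : IntegrableOn (fun x => γ / 2 * Real.exp (-(γ * x))) (Ici a) volume :=
      (integrableOn_exp_neg_Ici hγ a).const_mul (γ/2)
    refine hI.congr_fun ?_ measurableSet_Ici
    intro x hx
    simp only [abs_of_nonneg (le_trans h hx), neg_mul]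
  · rw [← Ico_union_Ici_eq_Ici (le_of_lt h)]
    refine IntegrableOn.union ?_ ?_
    · exact (Continuous.integrableOn_Icc (by continuity)).mono_set Ico_subset_Icc_self
    · have hI : IntegrableOn (fun x => γ / 2 * Real.exp (-(γ * x))) (Ici (0:ℝ)) volume :=
        (integrableOn_exp_neg_Ici hγ 0).const_mul (γ/2)
      refine hI.congr_fun ?_ measurableSet_Ici
      intro x hx
      simp only [mem_Ici] at hx
      simp only [abs_of_nonneg hx, neg_mul]

lemma fr_integrable (hγ : 0 < γ) :
    Integrable (fun x => γ / 2 * Real.exp (-γ * |x|)) := by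
  rw [← integrableOn_univ, ← Iic_union_Ioi (a := (0:ℝ))]
  exact (fr_integrableOn_Iic hγ 0).union ((fr_integrableOn_Ici hγ 0).mono_set Ioi_subset_Ici_self)

lemma fr_total (hγ : 0 < γ) :
    ∫ x, γ / 2 * Real.exp (-γ * |x|) = 1 := by
  rw [← setIntegral_univ, ← Iic_union_Ioi (a := (0:ℝ)),
    setIntegral_union (Iic_disjoint_Ioi le_rfl) measurableSet_Ioi
      (fr_integrableOn_Iic hγ 0) ((fr_integrableOn_Ici hγ 0).mono_set Ioi_subset_Ici_self),
    ← integral_Ici_eq_integral_Ioi, fr_Iic hγ le_rfl, fr_Ici hγ le_rfl]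
  norm_num

lemma fr_Ici_neg (hγ : 0 < γ) {a : ℝ} (ha : a < 0) :
    ∫ x in Ici a, γ / 2 * Real.exp (-γ * |x|) = 1 - Real.exp (γ * a) / 2 := by
  have h := fr_total hγ
  rw [← setIntegral_univ, ← Iio_union_Ici (a := a),
    setIntegral_union (Iio_disjoint_Ici le_rfl) measurableSet_Ici
      ((fr_integrableOn_Iic hγ a).mono_set Iio_subset_Iic_self) (fr_integrableOn_Ici hγ a)]
      at h
  rw [← integral_Iic_eq_integral_Iio ..] at h
  rw [fr_Iic hγ (le_of_lt ha)] at h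
  linarith

lemma fr_surv (hγ : 0 < γ) (a : ℝ) :
    (volume.withDensity (fun x => ENNReal.ofReal (γ / 2 * Real.exp (-γ * |x|)))) (Ici a)
      = ENNReal.ofReal (if 0 ≤ a then Real.exp (-(γ * a)) / 2 else 1 - Real.exp (γ * a) / 2) := by
  rw [withDensity_apply _ measurableSet_Ici,
    ← ofReal_integral_eq_lintegral_ofReal (fr_integrableOn_Ici hγ a)
      (Filter.Eventually.of_forall fun x => by positivity)]
  rcases le_or_gt 0 a with h | h
  · rw [if_pos h, fr_Ici hγ h]
  · rw [if_neg (not_le.mpr h), fr_Ici_neg hγ h]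

lemma Gt_eqOn_A (hγ : 0 < γ) {t : ℝ} (ht : 0 < t) :
    EqOn (fun x => γ / 2 * Real.exp (-γ * |x|) *
        (if 0 ≤ t + x then Real.exp (-(γ * (t + x))) / 2 else 1 - Real.exp (γ * (t + x)) / 2))
      (fun x => γ / 2 * Real.exp (γ * x) - γ / 4 * Real.exp (γ * t) * Real.exp (2 * γ * x))
      (Iic (-t)) := by
  intro x hx
  simp only [mem_Iic] at hx
  have hx0 : x ≤ 0 := le_trans hx (by linarith)
  have he : Real.exp (γ * t) * Real.exp (2 * γ * x) = Real.exp (γ * x) * Real.exp (γ * (t + x)) := by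
    rw [← Real.exp_add, ← Real.exp_add]; congr 1; ring
  simp only [abs_of_nonpos hx0, neg_mul_neg]
  by_cases h : 0 ≤ t + x
  · have hxx : t + x = 0 := le_antisymm (by linarith) h
    rw [if_pos h, hxx, mul_zero, neg_zero, Real.exp_zero]
    have he2 : Real.exp (γ * t) * Real.exp (2 * γ * x) = Real.exp (γ * x) := by
      rw [he, hxx, mul_zero, Real.exp_zero, mul_one]
    linear_combination (γ / 4) * he2
  · rw [if_neg h]
    linear_combination (γ / 4) * he

lemma Gt_eqOn_B (hγ : 0 < γ) {t : ℝ} (ht : 0 < t) :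
    EqOn (fun x => γ / 2 * Real.exp (-γ * |x|) *
        (if 0 ≤ t + x then Real.exp (-(γ * (t + x))) / 2 else 1 - Real.exp (γ * (t + x)) / 2))
      (fun _ => γ / 4 * Real.exp (-(γ * t)))
      (Ico (-t) 0) := by
  intro x hx
  obtain ⟨hx1, hx2⟩ := hx
  have h : 0 ≤ t + x := by linarith
  simp only [abs_of_nonpos (le_of_lt hx2), neg_mul_neg, if_pos h]
  have he : Real.exp (γ * x) * Real.exp (-(γ * (t + x))) = Real.exp (-(γ * t)) := by
    rw [← Real.exp_add]; congr 1; ring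
  calc γ / 2 * Real.exp (γ * x) * (Real.exp (-(γ * (t + x))) / 2)
      = γ / 4 * (Real.exp (γ * x) * Real.exp (-(γ * (t + x)))) := by ring
    _ = γ / 4 * Real.exp (-(γ * t)) := by rw [he]

lemma Gt_eqOn_C (hγ : 0 < γ) {t : ℝ} (ht : 0 < t) :
    EqOn (fun x => γ / 2 * Real.exp (-γ * |x|) *
        (if 0 ≤ t + x then Real.exp (-(γ * (t + x))) / 2 else 1 - Real.exp (γ * (t + x)) / 2))
      (fun x => γ / 4 * Real.exp (-(γ * t)) * Real.exp (-(2 * γ * x)))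
      (Ici 0) := by
  intro x hx
  simp only [mem_Ici] at hx
  have h : 0 ≤ t + x := by linarith
  simp only [abs_of_nonneg hx, neg_mul, if_pos h]
  have he : Real.exp (-(γ * x)) * Real.exp (-(γ * (t + x)))
      = Real.exp (-(γ * t)) * Real.exp (-(2 * γ * x)) := by
    rw [← Real.exp_add, ← Real.exp_add]; congr 1; ring
  calc γ / 2 * Real.exp (-(γ * x)) * (Real.exp (-(γ * (t + x))) / 2)
      = γ / 4 * (Real.exp (-(γ * x)) * Real.exp (-(γ * (t + x)))) := by ring
    _ = γ / 4 * Real.exp (-(γ * t)) * Real.exp (-(2 * γ * x)) := by rw [he]; ring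

lemma key_integral (hγ : 0 < γ) {t : ℝ} (ht : 0 < t) :
    ∫ x, γ / 2 * Real.exp (-γ * |x|) *
        (if 0 ≤ t + x then Real.exp (-(γ * (t + x))) / 2 else 1 - Real.exp (γ * (t + x)) / 2)
      = (2 + γ * t) * Real.exp (-(γ * t)) / 4 := by
  have h2γ : (0:ℝ) < 2 * γ := by linarith
  set g : ℝ → ℝ := fun x => γ / 2 * Real.exp (-γ * |x|) *
      (if 0 ≤ t + x then Real.exp (-(γ * (t + x))) / 2 else 1 - Real.exp (γ * (t + x)) / 2)
    with hg
  have IA0 : IntegrableOn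
      (fun x => γ / 2 * Real.exp (γ * x) - γ / 4 * Real.exp (γ * t) * Real.exp (2 * γ * x))
      (Iic (-t)) volume :=
    ((integrableOn_exp_mul_Iic hγ (-t)).const_mul (γ/2)).sub
      ((integrableOn_exp_mul_Iic h2γ (-t)).const_mul (γ/4 * Real.exp (γ * t)))
  have IA : IntegrableOn g (Iic (-t)) volume :=
    IA0.congr_fun (Gt_eqOn_A hγ ht).symm measurableSet_Iic
  have IB : IntegrableOn g (Ioo (-t) 0) volume :=
    ((integrableOn_const measure_Ioo_lt_top.ne).congr_fun
      (((Gt_eqOn_B hγ ht).symm).mono Ioo_subset_Ico_self) measurableSet_Ioo)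
  have IC0 : IntegrableOn (fun x => γ / 4 * Real.exp (-(γ * t)) * Real.exp (-(2 * γ * x)))
      (Ici (0:ℝ)) volume :=
    (integrableOn_exp_neg_Ici h2γ 0).const_mul (γ/4 * Real.exp (-(γ * t)))
  have IC : IntegrableOn g (Ici (0:ℝ)) volume :=
    IC0.congr_fun (Gt_eqOn_C hγ ht).symm measurableSet_Ici
  have hIoi : Ioo (-t) (0:ℝ) ∪ Ici (0:ℝ) = Ioi (-t) := Ioo_union_Ici_eq_Ioi (by linarith)
  have hdisj2 : Disjoint (Ioo (-t) (0:ℝ)) (Ici (0:ℝ)) :=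
    (Iio_disjoint_Ici le_rfl).mono_left Ioo_subset_Iio_self
  have hIoiInt : IntegrableOn g (Ioi (-t)) volume := by
    rw [← hIoi]; exact IB.union IC
  have hsplit : ∫ x, g x = (∫ x in Iic (-t), g x) + ((∫ x in Ioo (-t) 0, g x)
      + (∫ x in Ici 0, g x)) := by
    rw [← setIntegral_univ, ← Iic_union_Ioi (a := (-t)),
      setIntegral_union (Iic_disjoint_Ioi le_rfl) measurableSet_Ioi IA hIoiInt,
      ← hIoi, setIntegral_union hdisj2 measurableSet_Ici IB IC]
  have vA : ∫ x in Iic (-t), g x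
      = γ / 2 * (Real.exp (γ * (-t)) / γ)
        - γ / 4 * Real.exp (γ * t) * (Real.exp (2 * γ * (-t)) / (2 * γ)) := by
    rw [setIntegral_congr_fun measurableSet_Iic (Gt_eqOn_A hγ ht),
      integral_sub (((integrableOn_exp_mul_Iic hγ (-t)).const_mul (γ/2)))
        (((integrableOn_exp_mul_Iic h2γ (-t)).const_mul (γ/4 * Real.exp (γ * t)))),
      integral_const_mul, integral_const_mul, expIic hγ, expIic h2γ]
  have vB : ∫ x in Ioo (-t) 0, g x = t * (γ / 4 * Real.exp (-(γ * t))) := by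
    rw [setIntegral_congr_fun measurableSet_Ioo
      (((Gt_eqOn_B hγ ht)).mono Ioo_subset_Ico_self), setIntegral_const,
      Real.volume_real_Ioo, smul_eq_mul]
    rw [show (0:ℝ) - (-t) = t by ring, max_eq_left (le_of_lt ht)]
  have vC : ∫ x in Ici 0, g x
      = γ / 4 * Real.exp (-(γ * t)) * (Real.exp (-(2 * γ * 0)) / (2 * γ)) := by
    rw [setIntegral_congr_fun measurableSet_Ici (Gt_eqOn_C hγ ht),
      integral_const_mul, integral_Ici_eq_integral_Ioi, expIoi h2γ]
  rw [hsplit, vA, vB, vC]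
  have e1 : Real.exp (γ * -t) = Real.exp (-(γ * t)) := by congr 1; ring
  have e2 : Real.exp (2 * γ * -t) = Real.exp (-(γ * t)) * Real.exp (-(γ * t)) := by
    rw [← Real.exp_add]; congr 1; ring
  have e4 : Real.exp (γ * t) * (Real.exp (-(γ * t)) * Real.exp (-(γ * t)))
      = Real.exp (-(γ * t)) := by
    rw [← Real.exp_add, ← Real.exp_add]; congr 1; ring
  rw [e1, e2, mul_zero, neg_zero, Real.exp_zero]
  have hγ' : γ ≠ 0 := ne_of_gt hγ
  have e5 : Real.exp (-(γ * t)) * Real.exp (γ * t) = 1 := by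
    rw [← Real.exp_add]; simp
  field_simp
  linear_combination (-1:ℝ) * e5

lemma g_integrable (hγ : 0 < γ) {t : ℝ} (ht : 0 < t) :
    Integrable (fun x => γ / 2 * Real.exp (-γ * |x|) *
      (if 0 ≤ t + x then Real.exp (-(γ * (t + x))) / 2 else 1 - Real.exp (γ * (t + x)) / 2)) := by
  have h2γ : (0:ℝ) < 2 * γ := by linarith
  have IA0 : IntegrableOn
      (fun x => γ / 2 * Real.exp (γ * x) - γ / 4 * Real.exp (γ * t) * Real.exp (2 * γ * x))
      (Iic (-t)) volume :=
    ((integrableOn_exp_mul_Iic hγ (-t)).const_mul (γ/2)).sub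
      ((integrableOn_exp_mul_Iic h2γ (-t)).const_mul (γ/4 * Real.exp (γ * t)))
  have IA : IntegrableOn (fun x => γ / 2 * Real.exp (-γ * |x|) *
      (if 0 ≤ t + x then Real.exp (-(γ * (t + x))) / 2 else 1 - Real.exp (γ * (t + x)) / 2))
      (Iic (-t)) volume :=
    IA0.congr_fun (Gt_eqOn_A hγ ht).symm measurableSet_Iic
  have IB : IntegrableOn (fun x => γ / 2 * Real.exp (-γ * |x|) *
      (if 0 ≤ t + x then Real.exp (-(γ * (t + x))) / 2 else 1 - Real.exp (γ * (t + x)) / 2))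
      (Ioo (-t) 0) volume :=
    (integrableOn_const measure_Ioo_lt_top.ne).congr_fun
      (((Gt_eqOn_B hγ ht).symm).mono Ioo_subset_Ico_self) measurableSet_Ioo
  have IC0 : IntegrableOn (fun x => γ / 4 * Real.exp (-(γ * t)) * Real.exp (-(2 * γ * x)))
      (Ici (0:ℝ)) volume :=
    (integrableOn_exp_neg_Ici h2γ 0).const_mul (γ/4 * Real.exp (-(γ * t)))
  have IC : IntegrableOn (fun x => γ / 2 * Real.exp (-γ * |x|) *
      (if 0 ≤ t + x then Real.exp (-(γ * (t + x))) / 2 else 1 - Real.exp (γ * (t + x)) / 2))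
      (Ici (0:ℝ)) volume :=
    IC0.congr_fun (Gt_eqOn_C hγ ht).symm measurableSet_Ici
  have hIoi : Ioo (-t) (0:ℝ) ∪ Ici (0:ℝ) = Ioi (-t) := Ioo_union_Ici_eq_Ioi (by linarith)
  rw [← integrableOn_univ, ← Iic_union_Ioi (a := (-t))]
  refine IA.union ?_
  rw [← hIoi]
  exact IB.union IC

lemma g_nonneg (hγ : 0 < γ) (t : ℝ) (x : ℝ) :
    0 ≤ γ / 2 * Real.exp (-γ * |x|) *
      (if 0 ≤ t + x then Real.exp (-(γ * (t + x))) / 2 else 1 - Real.exp (γ * (t + x)) / 2) := by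
  refine mul_nonneg (by positivity) ?_
  split_ifs with h
  · positivity
  · have h1 : Real.exp (γ * (t + x)) < 1 := by
      rw [Real.exp_lt_one_iff]
      push_neg at h
      nlinarith
    linarith

/-- Noisy max with two classes and counts `n₁ > n₂`: the probability that the output is
not class 1 equals `(2 + γ(n₁ - n₂)) e^{-γ(n₁-n₂)} / 4` (the bound of
Lemma `bound_on_q` holds with equality, i.e. it is tight). -/
theorem noisy_max_two_classes_tight
    {Ω : Type*} [MeasureSpace Ω] [IsProbabilityMeasure (ℙ : Measure Ω)]
    (γ : ℝ) (hγ : 0 < γ) (n₁ n₂ : ℤ) (hn : n₂ < n₁)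
    (L₁ L₂ : Ω → ℝ) (hL₁ : Measurable L₁) (hL₂ : Measurable L₂)
    (hindep : IndepFun L₁ L₂ ℙ)
    (hpdf : ∀ X ∈ [L₁, L₂], Measure.map X ℙ =
      volume.withDensity (fun x => ENNReal.ofReal (γ / 2 * Real.exp (-γ * |x|)))) :
    ℙ {ω | (n₁ : ℝ) + L₁ ω ≤ (n₂ : ℝ) + L₂ ω} =
      ENNReal.ofReal ((2 + γ * ((n₁ : ℝ) - (n₂ : ℝ))) *
        Real.exp (-γ * ((n₁ : ℝ) - (n₂ : ℝ))) / 4) := by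
  set t : ℝ := (n₁ : ℝ) - (n₂ : ℝ) with hth
  have ht : 0 < t := by
    have : (n₂:ℝ) < (n₁:ℝ) := by exact_mod_cast hn
    simp only [hth]; linarith
  set f : ℝ → ENNReal := fun x => ENNReal.ofReal (γ / 2 * Real.exp (-γ * |x|)) with hfdef
  set μ := volume.withDensity f with hμ
  have h1 : Measure.map L₁ ℙ = μ := hpdf L₁ (by simp)
  have h2 : Measure.map L₂ ℙ = μ := hpdf L₂ (by simp)
  have hfmeas : Measurable f :=
    ((continuous_const.mul ((continuous_const.mul continuous_abs).rexp)).measurable).ennreal_ofReal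
  have hPμ : IsProbabilityMeasure μ := h1 ▸ Measure.isProbabilityMeasure_map hL₁.aemeasurable
  have hprod : Measure.map (fun ω => (L₁ ω, L₂ ω)) ℙ = μ.prod μ := by
    rw [(indepFun_iff_map_prod_eq_prod_map_map hL₁.aemeasurable hL₂.aemeasurable).mp hindep,
      h1, h2]
  have hS : MeasurableSet {p : ℝ × ℝ | (n₁:ℝ) + p.1 ≤ (n₂:ℝ) + p.2} :=
    measurableSet_le (measurable_const.add measurable_fst) (measurable_const.add measurable_snd)
  have hset : {ω | (n₁:ℝ) + L₁ ω ≤ (n₂:ℝ) + L₂ ω}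
      = (fun ω => (L₁ ω, L₂ ω)) ⁻¹' {p : ℝ × ℝ | (n₁:ℝ) + p.1 ≤ (n₂:ℝ) + p.2} := rfl
  rw [hset, ← Measure.map_apply (hL₁.prodMk hL₂) hS, hprod, Measure.prod_apply hS]
  have hpre : ∀ x : ℝ, (Prod.mk x ⁻¹' {p : ℝ × ℝ | (n₁:ℝ) + p.1 ≤ (n₂:ℝ) + p.2})
      = Ici (t + x) := by
    intro x
    ext y
    simp only [mem_preimage, mem_setOf_eq, mem_Ici, hth]
    constructor <;> intro <;> linarith
  have hGmeas : Measurable (fun x : ℝ => ENNReal.ofReal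
      (if 0 ≤ t + x then Real.exp (-(γ * (t + x))) / 2 else 1 - Real.exp (γ * (t + x)) / 2)) := by
    refine Measurable.ennreal_ofReal (Measurable.ite ?_ ?_ ?_)
    · exact measurableSet_le measurable_const (measurable_const.add measurable_id)
    · exact (((measurable_const.add measurable_id).const_mul γ).neg.exp).div_const 2
    · exact measurable_const.sub ((((measurable_const.add measurable_id).const_mul γ).exp).div_const 2)
  calc ∫⁻ x, μ (Prod.mk x ⁻¹' {p : ℝ × ℝ | (n₁:ℝ) + p.1 ≤ (n₂:ℝ) + p.2}) ∂μ
      = ∫⁻ x, ENNReal.ofReal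
          (if 0 ≤ t + x then Real.exp (-(γ * (t + x))) / 2
           else 1 - Real.exp (γ * (t + x)) / 2) ∂μ := by
        refine lintegral_congr fun x => ?_
        rw [hpre x, hμ, hfdef, fr_surv hγ]
    _ = ∫⁻ x, (f * fun x => ENNReal.ofReal
          (if 0 ≤ t + x then Real.exp (-(γ * (t + x))) / 2
           else 1 - Real.exp (γ * (t + x)) / 2)) x := by
        rw [hμ, lintegral_withDensity_eq_lintegral_mul volume hfmeas hGmeas]
    _ = ∫⁻ x, ENNReal.ofReal (γ / 2 * Real.exp (-γ * |x|) *
          (if 0 ≤ t + x then Real.exp (-(γ * (t + x))) / 2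
           else 1 - Real.exp (γ * (t + x)) / 2)) := by
        refine lintegral_congr fun x => ?_
        simp only [Pi.mul_apply, hfdef]
        exact (ENNReal.ofReal_mul (by positivity)).symm
    _ = ENNReal.ofReal (∫ x, γ / 2 * Real.exp (-γ * |x|) *
          (if 0 ≤ t + x then Real.exp (-(γ * (t + x))) / 2
           else 1 - Real.exp (γ * (t + x)) / 2)) :=
        (ofReal_integral_eq_lintegral_ofReal (g_integrable hγ ht)
          (Filter.Eventually.of_forall fun x => g_nonneg hγ t x)).symm
    _ = ENNReal.ofReal ((2 + γ * t) * Real.exp (-γ * t) / 4) := by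
        rw [key_integral hγ ht, neg_mul]
end
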